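/- If G is a graph on n vertices and the permanental polynomial of G is π(G,x) = Σ_{k=0}^n b_k x^{n-k}, then G is bipartite if and only if b_k = 0 for every odd k with 0 ≤ k ≤ n. -/

import Mathlib

open Polynomial Finset

section Aux
variable {V : Type*} [Fintype V] [DecidableEq V]

lemma getLast_eq_of_eq {α : Type*} {l l' : List α} (h : l = l') (hl : l ≠ []) :
    l.getLast hl = l'.getLast (h ▸ hl) := by subst h; rfl

variable {V : Type*} [Fintype V] [DecidableEq V]

lemma perm_of_odd_closed_walk {G : SimpleGraph V} :
    ∀ (n : ℕ) (v : V) (w : G.Walk v v), w.length = n → Odd w.length →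
    ∃ σ : Equiv.Perm V, (∀ i, σ i ≠ i → G.Adj i (σ i)) ∧ Odd σ.support.card := by
  intro n
  induction n using Nat.strong_induction_on with
  | _ n ih =>
  intro v w hn hodd
  by_cases hnd : w.support.tail.Nodup
  · -- base case: the walk is a cycle; use formPerm
    set L : List V := w.support.tail with hL
    have hsup : w.support = v :: L := w.support_eq_cons
    have hlen : L.length = w.length := by
      have := w.length_support
      rw [hsup] at this
      simp at this
      omega
    have hchain : List.Chain G.Adj v L := by
      have := w.isChain_adj_support
      rw [hsup] at this
      exact this
    have hchain' : (∀ h : 0 < L.length, G.Adj v (L.get ⟨0, h⟩)) ∧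
        ∀ (i : ℕ) (h : i < L.length - 1),
          G.Adj (L.get ⟨i, by omega⟩) (L.get ⟨i+1, by omega⟩) := by
      have hc := List.isChain_iff_getElem.mp hchain
      exact ⟨fun h => by simpa using hc 0 (by simp; omega),
        fun i h => hc (i+1) (by simp; omega)⟩
    obtain ⟨h0, hstep⟩ := hchain'
    have hpos : 0 < L.length := by
      rw [hlen]; rcases hodd with ⟨m, hm⟩; omega
    have hLne : L ≠ [] := List.ne_nil_of_length_pos hpos
    have hlast : L.getLast hLne = v := by
      have h1 := w.getLast_support
      rw [getLast_eq_of_eq hsup] at h1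
      rwa [List.getLast_cons hLne] at h1
    have h3 : 3 ≤ L.length := by
      rcases Nat.lt_or_ge L.length 3 with hlt | hge
      · exfalso
        have h1 : L.length = 1 := by
          rw [hlen] at *
          rw [Nat.odd_iff] at hodd
          omega
        have heq : L.getLast hLne = L.get ⟨0, hpos⟩ := by
          rw [List.getLast_eq_getElem, List.get_eq_getElem]
          congr 1
          omega
        have hadj := h0 hpos
        rw [← heq, hlast] at hadj
        exact G.irrefl hadj
      · exact hge
    refine ⟨L.formPerm, ?_, ?_⟩
    · intro i hi
      have hiL : i ∈ L := List.mem_of_formPerm_apply_ne hi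
      obtain ⟨⟨j, hj⟩, rfl⟩ := List.mem_iff_get.mp hiL
      rw [List.get_eq_getElem, List.formPerm_apply_getElem L hnd j hj]
      show G.Adj (L.get ⟨j, hj⟩) (L.get ⟨(j + 1) % L.length, Nat.mod_lt _ (by omega)⟩)
      by_cases hjk : j + 1 < L.length
      · have hmod : (j + 1) % L.length = j + 1 := Nat.mod_eq_of_lt hjk
        simp only [hmod]
        exact hstep j (by omega)
      · have hj1 : j + 1 = L.length := by omega
        have hmod : (j + 1) % L.length = 0 := by rw [hj1, Nat.mod_self]
        simp only [hmod]
        have heq : L.get ⟨j, hj⟩ = v := by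
          rw [← hlast, List.getLast_eq_getElem, List.get_eq_getElem]
          congr 1
          show j = L.length - 1
          omega
        rw [heq]
        exact h0 hpos
    · have hs : L.formPerm.support = L.toFinset :=
        List.support_formPerm_of_nodup L hnd (by
          intro x hx
          rw [hx] at h3
          simp at h3)
      rw [hs]
      rw [List.card_toFinset, hnd.dedup, hlen]
      exact hodd
  · -- there is a repeated vertex: split the walk
    cases w with
    | nil => simp at hodd
    | @cons _ y _ h d =>
      have hd : ¬ d.support.Nodup := by simpa using hnd
      rw [List.nodup_iff_count_le_one] at hd
      push_neg at hd
      obtain ⟨x, hx2⟩ := hd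
      have hx : x ∈ d.support := by
        rw [← List.count_pos_iff]
        omega
      set d1 := d.takeUntil x hx with hd1
      set d2 := d.dropUntil x hx with hd2
      have hspec : d1.append d2 = d := d.take_spec hx
      have hdlen : d1.length + d2.length = d.length := by
        rw [← hspec]; exact (SimpleGraph.Walk.length_append _ _).symm
      have hcount : d.support.count x = d1.support.count x + d2.support.tail.count x := by
        rw [← hspec, SimpleGraph.Walk.support_append, List.count_append]
      have hc1 : d1.support.count x = 1 := d.count_support_takeUntil_eq_one hx
      have hxd2 : x ∈ d2.support.tail := by
        rw [← List.count_pos_iff]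
        omega
      cases hd2e : d2 with
      | nil => rw [hd2e] at hxd2; simp at hxd2
      | @cons _ z _ h2 e =>
        have hxe : x ∈ e.support := by
          rw [hd2e] at hxd2
          simpa using hxd2
        set e1 := e.takeUntil x hxe with he1
        set e2 := e.dropUntil x hxe with he2
        have helen : e1.length + e2.length = e.length := by
          rw [← e.take_spec hxe]; exact (SimpleGraph.Walk.length_append _ _).symm
        have hd2len : d2.length = e.length + 1 := by rw [hd2e]; simp
        set B : G.Walk x x := SimpleGraph.Walk.cons h2 e1 with hB
        set C : G.Walk v v := (SimpleGraph.Walk.cons h d1).append e2 with hC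
        have hBlen : B.length = e1.length + 1 := by simp [hB]
        have hClen : C.length = d1.length + 1 + e2.length := by
          simp [hC]; omega
        have hwlen : (SimpleGraph.Walk.cons h d).length = d.length + 1 := by simp
        rw [Nat.odd_iff] at hodd
        rcases Nat.even_or_odd B.length with hBo | hBo
        · rw [Nat.even_iff] at hBo
          refine ih C.length (by omega) v C rfl ?_
          rw [Nat.odd_iff]
          omega
        · rw [Nat.odd_iff] at hBo
          exact ih B.length (by omega) x B rfl (Nat.odd_iff.mpr hBo)

lemma not_odd_card_of_colorable {G : SimpleGraph V} (hc : G.Colorable 2)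
    (σ : Equiv.Perm V) (hσ : ∀ i, σ i ≠ i → G.Adj i (σ i)) :
    ¬ Odd σ.support.card := by
  obtain ⟨C⟩ := hc
  set c : V → ZMod 2 := fun v => if C v = 0 then 0 else 1 with hcc
  have hvalid : ∀ {u v : V}, G.Adj u v → c v = c u + 1 := by
    intro u v huv
    have hne := C.valid huv
    have : ∀ a b : Fin 2, a ≠ b → (if b = 0 then (0 : ZMod 2) else 1) =
        (if a = 0 then (0 : ZMod 2) else 1) + 1 := by decide
    exact this _ _ hne
  have hkey : ∀ i ∈ σ.support, c (σ i) = c i + 1 := fun i hi =>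
    hvalid (hσ i (Equiv.Perm.mem_support.mp hi))
  have hsum : ∑ i ∈ σ.support, c (σ i) = ∑ i ∈ σ.support, c i :=
    Finset.sum_bijective σ σ.bijective
      (fun i => Equiv.Perm.apply_mem_support.symm) (fun i _ => rfl)
  rw [Finset.sum_congr rfl hkey, Finset.sum_add_distrib, Finset.sum_const] at hsum
  have hcard : (σ.support.card : ZMod 2) = 0 := by
    have h2 : (σ.support.card : ZMod 2) = σ.support.card • (1 : ZMod 2) := by
      rw [nsmul_eq_mul, mul_one]
    rw [h2]
    exact add_eq_left.mp hsum
  intro hodd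
  rw [ZMod.natCast_eq_zero_iff] at hcard
  rw [Nat.odd_iff] at hodd
  omega

lemma exists_odd_closed_walk_of_not_colorable {G : SimpleGraph V}
    (h : ¬ G.Colorable 2) : ∃ (v : V) (w : G.Walk v v), Odd w.length := by
  by_contra hw
  push_neg at hw
  apply h
  refine ⟨SimpleGraph.Coloring.mk
    (fun v => (⟨G.dist ((G.connectedComponentMk v).out) v % 2, by omega⟩ : Fin 2)) ?_⟩
  intro u v huv heq
  have hcomp : G.connectedComponentMk u = G.connectedComponentMk v :=
    SimpleGraph.ConnectedComponent.sound huv.reachable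
  simp only [Fin.mk.injEq] at heq
  rw [hcomp] at heq
  set r := (G.connectedComponentMk v).out with hr
  have hmk : G.connectedComponentMk r = G.connectedComponentMk v := Quot.out_eq _
  have hru : G.Reachable r u :=
    (SimpleGraph.ConnectedComponent.eq).mp (hmk.trans hcomp.symm)
  have hrv : G.Reachable r v := (SimpleGraph.ConnectedComponent.eq).mp hmk
  obtain ⟨p, hp⟩ := hru.exists_walk_length_eq_dist
  obtain ⟨q, hq⟩ := hrv.exists_walk_length_eq_dist
  have hpar : G.dist r u % 2 = G.dist r v % 2 := heq
  have hW := hw r (p.append (SimpleGraph.Walk.cons huv q.reverse))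
  rw [Nat.odd_iff] at hW
  simp only [SimpleGraph.Walk.length_append, SimpleGraph.Walk.length_cons,
    SimpleGraph.Walk.length_reverse] at hW
  omega

lemma term_eq (G : SimpleGraph V) [DecidableRel G.Adj] (σ : Equiv.Perm V) :
    (∏ i, ((X : Polynomial ℂ) • (1 : Matrix V V (Polynomial ℂ))
        - SimpleGraph.adjMatrix (Polynomial ℂ) G) (σ i) i)
      = if ∀ i, σ i ≠ i → G.Adj i (σ i) then
          C ((-1 : ℂ) ^ σ.support.card) * X ^ (Fintype.card V - σ.support.card)
        else 0 := by
  classical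
  rw [← Finset.prod_mul_prod_compl σ.support]
  have h1 : ∀ i ∈ σ.supportᶜ, ((X : Polynomial ℂ) • (1 : Matrix V V (Polynomial ℂ))
      - SimpleGraph.adjMatrix (Polynomial ℂ) G) (σ i) i = X := by
    intro i hi
    have hfix : σ i = i := by simpa using (Finset.mem_compl.mp hi)
    simp [hfix, Matrix.sub_apply, Matrix.smul_apply, Matrix.one_apply_eq]
  have h2 : ∀ i ∈ σ.support, ((X : Polynomial ℂ) • (1 : Matrix V V (Polynomial ℂ))
      - SimpleGraph.adjMatrix (Polynomial ℂ) G) (σ i) i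
      = (-1) * (if G.Adj i (σ i) then 1 else 0) := by
    intro i hi
    have hne : σ i ≠ i := Equiv.Perm.mem_support.mp hi
    simp only [Matrix.sub_apply, Matrix.smul_apply, Matrix.one_apply_ne hne,
      SimpleGraph.adjMatrix_apply, smul_eq_mul, mul_zero, zero_sub]
    have hsymm : G.Adj (σ i) i ↔ G.Adj i (σ i) := G.adj_comm _ _
    simp only [hsymm]
    split_ifs <;> simp
  rw [Finset.prod_congr rfl h1, Finset.prod_congr rfl h2, Finset.prod_const,
    Finset.prod_mul_distrib, Finset.prod_const, Finset.prod_boole,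
    Finset.card_compl]
  have hcond : (∀ i ∈ σ.support, G.Adj i (σ i)) ↔ (∀ i, σ i ≠ i → G.Adj i (σ i)) := by
    constructor
    · intro hh i hne
      exact hh i (Equiv.Perm.mem_support.mpr hne)
    · intro hh i hi
      exact hh i (Equiv.Perm.mem_support.mp hi)
  simp only [hcond]
  have hC : ((-1 : Polynomial ℂ)) ^ σ.support.card = C ((-1 : ℂ) ^ σ.support.card) := by
    simp
  split_ifs with hh
  · rw [mul_one, hC, mul_comm]
  · rw [mul_zero, zero_mul]

lemma coeff_eq_zero_iff (G : SimpleGraph V) [DecidableRel G.Adj] (k : ℕ)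
    (hk : k ≤ Fintype.card V) :
    (Matrix.permanent ((X : Polynomial ℂ) • (1 : Matrix V V (Polynomial ℂ))
        - SimpleGraph.adjMatrix (Polynomial ℂ) G)).coeff (Fintype.card V - k) = 0
      ↔ ∀ σ : Equiv.Perm V, (∀ i, σ i ≠ i → G.Adj i (σ i)) → σ.support.card ≠ k := by
  classical
  rw [Matrix.permanent, Polynomial.finset_sum_coeff]
  have hterm : ∀ σ : Equiv.Perm V,
      (∏ i, ((X : Polynomial ℂ) • (1 : Matrix V V (Polynomial ℂ))
        - SimpleGraph.adjMatrix (Polynomial ℂ) G) (σ i) i).coeff (Fintype.card V - k)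
      = if (∀ i, σ i ≠ i → G.Adj i (σ i)) ∧ σ.support.card = k then ((-1 : ℂ) ^ k) else 0 := by
    intro σ
    rw [term_eq G σ]
    have hcle : σ.support.card ≤ Fintype.card V := Finset.card_le_univ _
    split_ifs with h1 h2 h2
    · rw [coeff_C_mul, coeff_X_pow,
        if_pos (by omega : Fintype.card V - k = Fintype.card V - σ.support.card)]
      rw [h2.2, mul_one]
    · rw [coeff_C_mul, coeff_X_pow, if_neg (by
        intro hcontra
        exact h2 ⟨h1, by omega⟩), mul_zero]
    · exact absurd h2.1 h1
    · simp
  rw [Finset.sum_congr rfl fun σ _ => hterm σ]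
  have hmb : ∀ (Q : Prop) (_ : Decidable Q),
      (if Q then ((-1 : ℂ) ^ k) else 0) = (-1 : ℂ) ^ k * (if Q then 1 else 0) :=
    fun Q _ => (mul_boole Q _).symm
  simp only [hmb]
  rw [← Finset.mul_sum, Finset.sum_boole, mul_eq_zero]
  have hne : ((-1 : ℂ)) ^ k ≠ 0 := pow_ne_zero _ (by norm_num)
  simp only [hne, false_or, Nat.cast_eq_zero, Finset.card_eq_zero,
    Finset.filter_eq_empty_iff, Finset.mem_univ, true_implies]
  tauto

end Aux

/-- The permanental polynomial of a simple graph `G`: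
`π(G, x) = per(x I − A(G))`, computed over `ℂ[X]`. -/
noncomputable def permPoly {V : Type*} [Fintype V] [DecidableEq V]
    (G : SimpleGraph V) : Polynomial ℂ :=
  letI := Classical.decRel G.Adj
  Matrix.permanent ((X : Polynomial ℂ) • (1 : Matrix V V (Polynomial ℂ))
      - (SimpleGraph.adjMatrix (Polynomial ℂ) G))

/-- A graph is bipartite iff all odd-indexed coefficients of its permanental
polynomial `π(G,x) = Σ_{k=0}^n b_k x^{n-k}` vanish. -/
theorem bipartite_iff_odd_permPoly_coeff_eq_zero
    {V : Type*} [Fintype V] [DecidableEq V] (G : SimpleGraph V) :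
    G.Colorable 2 ↔
      ∀ k : ℕ, k ≤ Fintype.card V → Odd k →
        (permPoly G).coeff (Fintype.card V - k) = 0 := by
  letI := Classical.decRel G.Adj
  have hunfold : permPoly G = Matrix.permanent
      ((X : Polynomial ℂ) • (1 : Matrix V V (Polynomial ℂ))
        - SimpleGraph.adjMatrix (Polynomial ℂ) G) := rfl
  constructor
  · intro hc k hk hodd
    rw [hunfold, coeff_eq_zero_iff G k hk]
    intro σ hσ hcard
    exact not_odd_card_of_colorable hc σ hσ (hcard.symm ▸ hodd)
  · intro h
    by_contra hnc
    obtain ⟨v, w, hwodd⟩ := exists_odd_closed_walk_of_not_colorable hnc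
    obtain ⟨σ, hσ, hcodd⟩ := perm_of_odd_closed_walk w.length v w rfl hwodd
    have hk : σ.support.card ≤ Fintype.card V := Finset.card_le_univ _
    have hz := h σ.support.card hk hcodd
    rw [hunfold, coeff_eq_zero_iff G _ hk] at hz
    exact hz σ hσ rfl
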